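/- On the elliptic curve E : y^2 + xy = x^3 + 4040549489437705068551042·x^2 + 39096673111815206065773237234587256582331296000·x over Q, the point (0,0) is a rational point of order exactly 2, and x = -3613294426098135199878600 is the x-coordinate of a rational point of infinite order on E. -/

import Mathlib

def E : WeierstrassCurve.Affine ℚ :=
  ⟨1, 4040549489437705068551042, 0,
    39096673111815206065773237234587256582331296000, 0⟩

namespace ProofAux

open WeierstrassCurve.Affine WeierstrassCurve.Affine.Point

lemma Ea₁ : E.a₁ = 1 := rfl
lemma Ea₂ : E.a₂ = 4040549489437705068551042 := rfl
lemma Ea₃ : E.a₃ = 0 := rfl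
lemma Ea₄ : E.a₄ = 39096673111815206065773237234587256582331296000 := rfl
lemma Ea₆ : E.a₆ = 0 := rfl

lemma Ea₄_ne : E.a₄ ≠ 0 := by rw [Ea₄]; norm_num

/-- A prime cubed times a coprime number is not a rational square. -/
lemma not_isSquare_aux (p M : ℕ) (hp : p.Prime) (hM : ¬ p ∣ M) :
    ¬ IsSquare ((p ^ 3 * M : ℕ) : ℚ) := by
  rintro ⟨q, hq⟩
  have hM0 : M ≠ 0 := fun h => hM (h ▸ dvd_zero p)
  have hq2 : q ^ 2 = ((p ^ 3 * M : ℕ) : ℚ) := by rw [hq]; ring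
  have hden : q.den = 1 := by
    have h1 : (q ^ 2).den = 1 := by rw [hq2]; exact Rat.den_natCast _
    rw [Rat.den_pow, pow_two] at h1
    exact Nat.eq_one_of_mul_eq_one_right h1
  have hqz : q = (q.num : ℚ) := by
    conv_lhs => rw [← Rat.num_div_den q]
    rw [hden]; simp
  rw [hqz] at hq2
  have hint : q.num ^ 2 = ((p ^ 3 * M : ℕ) : ℤ) := by exact_mod_cast hq2
  have hnat : q.num.natAbs ^ 2 = p ^ 3 * M := by
    have := congrArg Int.natAbs hint
    simpa [Int.natAbs_pow, Int.natAbs_mul] using this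
  have hfac := congrArg (fun n : ℕ => n.factorization p) hnat
  simp only [Nat.factorization_pow, Nat.factorization_mul (pow_ne_zero 3 hp.pos.ne') hM0,
    Finsupp.add_apply, Finsupp.smul_apply, Nat.factorization_eq_zero_of_not_dvd hM,
    Nat.Prime.factorization hp, Finsupp.single_eq_same, smul_eq_mul] at hfac
  omega

lemma not_sq_a4 : ¬ IsSquare ((39096673111815206065773237234587256582331296000 : ℚ)) := by
  have h := not_isSquare_aux 5 312773384894521648526185897876698052658650368
    (by norm_num) (by norm_num)
  have e : ((5 ^ 3 * 312773384894521648526185897876698052658650368 : ℕ) : ℚ) =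
      39096673111815206065773237234587256582331296000 := by norm_num
  rwa [e] at h

lemma not_sq_D : ¬ IsSquare ((258714455746368612464987843926507905103817094036561 : ℚ)) := by
  have h := not_isSquare_aux 3 9582016879495133794999549775055848337178410890243
    (by norm_num) (by norm_num)
  have e : ((3 ^ 3 * 9582016879495133794999549775055848337178410890243 : ℕ) : ℚ) =
      258714455746368612464987843926507905103817094036561 := by norm_num
  rwa [e] at h

lemma not_isSquare_neg {a : ℚ} (ha : a < 0) : ¬ IsSquare a := by
  rintro ⟨r, rfl⟩
  nlinarith [mul_self_nonneg r]

lemma isSquare_of_mul_sq {a b : ℚ} (hb : b ≠ 0) (h : IsSquare (a * (b * b))) : IsSquare a := by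
  obtain ⟨r, hr⟩ := h
  exact ⟨r / b, by field_simp; linear_combination hr⟩

lemma isSquare_cancel {a b c : ℚ} (hb : b ≠ 0) (h : IsSquare (a * (b * c)))
    (h2 : IsSquare b) : IsSquare (a * c) := by
  obtain ⟨r, hr⟩ := h
  obtain ⟨s, hs⟩ := h2
  have hs0 : s ≠ 0 := fun h0 => hb (by rw [hs, h0, mul_zero])
  refine ⟨r / s, ?_⟩
  field_simp
  linear_combination hr - a * c * hs

/-- The descent map: the `x`-coordinate, except the 2-torsion point `(0,0)` maps to `a₄`. -/
noncomputable def α : E.Point → ℚ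
  | .zero => 1
  | @WeierstrassCurve.Affine.Point.some _ _ _ x _ _ => if x = 0 then E.a₄ else x

lemma α_zero : α 0 = 1 := rfl

lemma α_some {x y : ℚ} (h : E.Nonsingular x y) : α (some _ _ h) = if x = 0 then E.a₄ else x := rfl

lemma α_ne_zero (P : E.Point) : α P ≠ 0 := by
  rcases P with _ | @⟨x, y, h⟩
  · exact one_ne_zero
  · rw [α_some]
    split
    · exact Ea₄_ne
    · assumption

lemma EnegY (x y : ℚ) : E.negY x y = -y - x := by
  rw [negY, Ea₁, Ea₃]; ring

lemma y_eq_zero {y : ℚ} (h : E.Equation 0 y) : y = 0 := by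
  have := (E.equation_iff 0 y).mp h
  rw [Ea₁, Ea₂, Ea₃, Ea₄, Ea₆] at this
  nlinarith [sq_nonneg y]

/-- The two coefficient identities from the cubic whose roots are `x₁, x₂, x₃`. -/
lemma coeffs {x₁ x₂ y₁ y₂ : ℚ} (h₁ : E.Equation x₁ y₁) (h₂ : E.Equation x₂ y₂)
    (hxy : x₁ = x₂ → y₁ ≠ E.negY x₂ y₂) :
    x₁ * x₂ * E.addX x₁ x₂ (E.slope x₁ x₂ y₁ y₂) =
      (E.slope x₁ x₂ y₁ y₂ * x₁ - y₁) ^ 2 ∧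
    x₁ * x₂ + x₁ * E.addX x₁ x₂ (E.slope x₁ x₂ y₁ y₂)
        + x₂ * E.addX x₁ x₂ (E.slope x₁ x₂ y₁ y₂) =
      2 * x₁ * E.slope x₁ x₂ y₁ y₂ ^ 2 + (x₁ - 2 * y₁) * E.slope x₁ x₂ y₁ y₂
        + (E.a₄ - y₁) := by
  have h := addPolynomial_slope h₁ h₂ (fun h => hxy h.1 h.2)
  rw [addPolynomial_eq] at h
  have h' := neg_inj.mp h
  have hprod : (Polynomial.X - Polynomial.C x₁) * (Polynomial.X - Polynomial.C x₂) *
      (Polynomial.X - Polynomial.C (E.addX x₁ x₂ (E.slope x₁ x₂ y₁ y₂))) =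
      Cubic.toPoly ⟨1, -(x₁ + x₂ + E.addX x₁ x₂ (E.slope x₁ x₂ y₁ y₂)),
        x₁ * x₂ + x₁ * E.addX x₁ x₂ (E.slope x₁ x₂ y₁ y₂)
          + x₂ * E.addX x₁ x₂ (E.slope x₁ x₂ y₁ y₂),
        -(x₁ * x₂ * E.addX x₁ x₂ (E.slope x₁ x₂ y₁ y₂))⟩ := by
    simp only [Cubic.toPoly, map_neg, map_add, map_mul, map_one]
    ring
  have hco := (Cubic.toPoly_injective _ _).mp (h'.trans hprod)
  simp only [Cubic.mk.injEq] at hco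
  obtain ⟨-, -, hc, hd⟩ := hco
  simp only [Ea₁, Ea₃, Ea₆] at hc hd
  constructor
  · linear_combination hd
  · linear_combination -hc

/-- Multiplicativity of `α` up to squares. -/
lemma hom (P Q : E.Point) : IsSquare (α (P + Q) * (α P * α Q)) := by
  rcases P with _ | @⟨x₁, y₁, h₁⟩
  · rw [← zero_def, zero_add, α_zero]
    exact ⟨α Q, by ring⟩
  rcases Q with _ | @⟨x₂, y₂, h₂⟩
  · rw [← zero_def, add_zero, α_zero]
    exact ⟨α (some _ _ h₁), by ring⟩
  by_cases hxy : x₁ = x₂ ∧ y₁ = E.negY x₂ y₂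
  · rw [add_of_Y_eq hxy.1 hxy.2, α_zero]
    obtain ⟨hx, -⟩ := hxy
    subst hx
    exact ⟨α (some _ _ h₁), by rw [α_some, α_some]; ring⟩
  · have hxy' : x₁ = x₂ → y₁ ≠ E.negY x₂ y₂ := fun hx hy => hxy ⟨hx, hy⟩
    rw [add_some hxy]
    obtain ⟨K1, K2⟩ := coeffs h₁.1 h₂.1 hxy'
    by_cases hx1 : x₁ = 0
    · subst hx1
      have hy1 : y₁ = 0 := y_eq_zero h₁.1
      subst hy1
      have hx2 : x₂ ≠ 0 := by
        intro hx2
        subst hx2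
        have hy2 : y₂ = 0 := y_eq_zero h₂.1
        exact hxy' rfl (by rw [hy2, EnegY]; ring)
      have hK : x₂ * E.addX 0 x₂ (E.slope 0 x₂ 0 y₂) = E.a₄ := by
        linear_combination K2
      have hx3 : E.addX 0 x₂ (E.slope 0 x₂ 0 y₂) ≠ 0 := by
        intro h0
        rw [h0, mul_zero] at hK
        exact Ea₄_ne hK.symm
      rw [α_some, if_neg hx3, α_some, if_pos rfl, α_some, if_neg hx2]
      exact ⟨E.a₄, by linear_combination E.a₄ * hK⟩
    · by_cases hx2 : x₂ = 0
      · subst hx2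
        have hy2 : y₂ = 0 := y_eq_zero h₂.1
        subst hy2
        have hν : E.slope x₁ 0 y₁ 0 * x₁ - y₁ = 0 := by
          have : (E.slope x₁ 0 y₁ 0 * x₁ - y₁) ^ 2 = 0 := by linear_combination -K1
          exact pow_eq_zero_iff two_ne_zero |>.mp this
        have hK : x₁ * E.addX x₁ 0 (E.slope x₁ 0 y₁ 0) = E.a₄ := by
          linear_combination K2 + (2 * E.slope x₁ 0 y₁ 0 + 1) * hν
        have hx3 : E.addX x₁ 0 (E.slope x₁ 0 y₁ 0) ≠ 0 := by
          intro h0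
          rw [h0, mul_zero] at hK
          exact Ea₄_ne hK.symm
        rw [α_some, if_neg hx3, α_some, if_neg hx1, α_some, if_pos rfl]
        exact ⟨E.a₄, by linear_combination E.a₄ * hK⟩
      · by_cases hx3 : E.addX x₁ x₂ (E.slope x₁ x₂ y₁ y₂) = 0
        · have hν : E.slope x₁ x₂ y₁ y₂ * x₁ - y₁ = 0 := by
            have : (E.slope x₁ x₂ y₁ y₂ * x₁ - y₁) ^ 2 = 0 := by
              linear_combination -K1 + x₁ * x₂ * hx3
            exact pow_eq_zero_iff two_ne_zero |>.mp this
          have hK : x₁ * x₂ = E.a₄ := by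
            linear_combination K2 + (2 * E.slope x₁ x₂ y₁ y₂ + 1) * hν
                - (x₁ + x₂) * hx3
          rw [α_some, if_pos hx3, α_some, if_neg hx1, α_some, if_neg hx2]
          exact ⟨E.a₄, by linear_combination E.a₄ * hK⟩
        · rw [α_some, if_neg hx3, α_some, if_neg hx1, α_some, if_neg hx2]
          exact ⟨E.slope x₁ x₂ y₁ y₂ * x₁ - y₁, by linear_combination K1⟩

lemma sq_double (Q : E.Point) : IsSquare (α (Q + Q)) :=
  isSquare_of_mul_sq (α_ne_zero Q) (hom Q Q)

/-- Classification of rational 2-torsion: only `(0,0)`. -/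
lemma two_torsion {x y : ℚ} (h : E.Nonsingular x y) (hP : some _ _ h + some _ _ h = 0) :
    x = 0 ∧ y = 0 := by
  have hy : y = E.negY x y := by
    by_contra hy
    rw [add_self_of_Y_ne hy] at hP
    exact some_ne_zero _ hP
  rw [EnegY] at hy
  have hx : x = -2 * y := by linarith
  subst hx
  have heq := (E.equation_iff _ y).mp h.1
  rw [Ea₁, Ea₂, Ea₃, Ea₄, Ea₆] at heq
  by_cases hy0 : y = 0
  · exact ⟨by rw [hy0]; ring, hy0⟩
  · exfalso
    have hmul : y * (8 * y ^ 2 - 16162197957750820274204169 * y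
        + 2 * 39096673111815206065773237234587256582331296000) = 0 := by
      linear_combination heq
    have h8 : 8 * y ^ 2 - 16162197957750820274204169 * y
        + 2 * 39096673111815206065773237234587256582331296000 = 0 :=
      (mul_eq_zero.mp hmul).resolve_left hy0
    exact not_sq_D ⟨16 * y - 16162197957750820274204169, by linear_combination -32 * h8⟩

end ProofAux

open ProofAux WeierstrassCurve.Affine WeierstrassCurve.Affine.Point in
/-- On the rank-19 smallest-conductor curve with torsion `ℤ/2ℤ`, the point `(0,0)` has
order exactly 2, and `x = -3613294426098135199878600` is the `x`-coordinate of a rational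
point of infinite order. -/
theorem order_two_and_infinite_order_point :
    (∃ h : E.Nonsingular 0 0, addOrderOf (WeierstrassCurve.Affine.Point.some _ _ h) = 2) ∧
    ∃ y : ℚ, ∃ h : E.Nonsingular (-3613294426098135199878600) y,
      ∀ n : ℕ, 0 < n → n • WeierstrassCurve.Affine.Point.some _ _ h ≠ 0 := by
  constructor
  · have hT : E.Nonsingular 0 0 := by
      rw [nonsingular_zero]
      exact ⟨Ea₆, Or.inr Ea₄_ne⟩
    refine ⟨hT, ?_⟩
    haveI : Fact (Nat.Prime 2) := ⟨by norm_num⟩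
    apply addOrderOf_eq_prime
    · rw [two_smul]
      exact add_self_of_Y_eq (by rw [EnegY]; ring)
    · exact some_ne_zero hT
  · have hns : E.Nonsingular (-3613294426098135199878600)
        2331722569667057369316488273387345400 := by
      rw [nonsingular_iff']
      constructor
      · rw [equation_iff, Ea₁, Ea₂, Ea₃, Ea₄, Ea₆]
        norm_num
      · right
        rw [Ea₁, Ea₃]
        norm_num
    refine ⟨2331722569667057369316488273387345400, hns, ?_⟩
    intro n hn hne
    set P : E.Point := some _ _ hns with hPdef
    have hfin : IsOfFinAddOrder P := isOfFinAddOrder_iff_nsmul_eq_zero.mpr ⟨n, hn, hne⟩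
    have hk0 : 0 < addOrderOf P := hfin.addOrderOf_pos
    have hkP : addOrderOf P • P = 0 := addOrderOf_nsmul_eq_zero P
    have hαP : α P = -3613294426098135199878600 := by
      rw [hPdef, α_some, if_neg (by norm_num)]
    rcases Nat.even_or_odd (addOrderOf P) with ⟨m, hm⟩ | ⟨j, hj⟩
    · -- even order
      have hm0 : m ≠ 0 := by omega
      have hmk : m < addOrderOf P := by omega
      have hQ0 : m • P ≠ 0 := nsmul_ne_zero_of_lt_addOrderOf hm0 hmk
      have hQQ : m • P + m • P = 0 := by
        rw [← add_nsmul, ← hm, hkP]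
      obtain ⟨xq, yq, hq, hQeq⟩ : ∃ xq yq, ∃ hq : E.Nonsingular xq yq, m • P = some _ _ hq := by
        cases hE : m • P with
        | zero => exact absurd (hE.trans zero_def.symm) hQ0
        | some _ _ h => exact ⟨_, _, h, rfl⟩
      rw [hQeq] at hQQ
      obtain ⟨hx0, hy0⟩ := two_torsion hq hQQ
      have hαQ : α (m • P) = E.a₄ := by
        rw [hQeq, α_some, if_pos hx0]
      rcases Nat.even_or_odd m with ⟨j, hj⟩ | ⟨j, hj⟩
      · -- order divisible by 4 : a₄ would be a square
        have : IsSquare (α (m • P)) := by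
          have : m • P = j • P + j • P := by rw [hj, add_nsmul]
          rw [this]
          exact sq_double _
        rw [hαQ, Ea₄] at this
        exact not_sq_a4 this
      · -- order 2·odd : a₄ · x(P) would be a square
        have hdecomp : m • P = (j • P + j • P) + P := by
          rw [← add_nsmul]
          have : m = (j + j) + 1 := by omega
          rw [this, succ_nsmul]
        have s1 := hom (j • P + j • P) P
        rw [← hdecomp] at s1
        have s2 : IsSquare (α (j • P + j • P)) := sq_double _
        have := isSquare_cancel (α_ne_zero (j • P + j • P)) s1 s2
        rw [hαQ, hαP, Ea₄] at this
        exact not_isSquare_neg (by norm_num) this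
    · -- odd order: x(P) would be a square
      have hdecomp : P = (j + 1) • P + (j + 1) • P := by
        rw [← add_nsmul]
        have h1 : (j + 1) + (j + 1) = addOrderOf P + 1 := by omega
        rw [h1, succ_nsmul, hkP, zero_add]
      have : IsSquare (α P) := by
        rw [hdecomp]
        exact sq_double _
      rw [hαP] at this
      exact not_isSquare_neg (by norm_num) this
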